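/- For a prime p > 3, define def_(4) = I_{p,1} + 3·I_{p,-3}, where I_{p,q} = Σ_{k=1}^{p-1} ((1+μ^k)(1+μ^{kq}))/((1−μ^k)(1−μ^{kq})) and μ = exp(2πi/p). Then def_(4) = −8r if p = 3r+1 and def_(4) = −4r if p = 3r+2. -/

import Mathlib

open Finset

noncomputable def mu (p : ℕ) : ℂ := Complex.exp (2 * Real.pi * Complex.I / p)

noncomputable def Ipq (p : ℕ) (q : ℤ) : ℂ :=
  ∑ k ∈ Finset.Icc 1 (p - 1),
    ((1 + mu p ^ (k : ℤ)) * (1 + mu p ^ (q * k))) /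
      ((1 - mu p ^ (k : ℤ)) * (1 - mu p ^ (q * k)))

lemma sum_j_pow (x : ℂ) (n : ℕ) :
    (∑ j ∈ range n, (j : ℂ) * x ^ j) * (x - 1)
      = ((n : ℂ) - 1) * x ^ n - (∑ j ∈ range n, x ^ j) + 1 := by
  induction n with
  | zero => simp
  | succ n ih =>
    rw [Finset.sum_range_succ, Finset.sum_range_succ (f := fun j => x ^ j)]
    push_cast
    linear_combination ih

lemma inv_one_sub (n : ℕ) (hn : (n : ℂ) ≠ 0) (η : ℂ) (hη : η ≠ 1) (hηn : η ^ n = 1) :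
    1 / (1 - η) = -(1 / n) * ∑ j ∈ range n, (j : ℂ) * η ^ j := by
  have hη' : η - 1 ≠ 0 := sub_ne_zero.mpr hη
  have hg : ∑ j ∈ range n, η ^ j = 0 := by
    rw [geom_sum_eq hη, hηn, sub_self, zero_div]
  have h := sum_j_pow η n
  rw [hηn, hg] at h
  have hsum : ∑ j ∈ range n, (j : ℂ) * η ^ j = n / (η - 1) := by
    rw [eq_div_iff hη']
    linear_combination h
  rw [hsum]
  have h1 : 1 - η ≠ 0 := sub_ne_zero.mpr (fun hh => hη hh.symm)
  field_simp
  ring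

lemma termwise (ζ : ℂ) (h0 : ζ ≠ 0) (h1 : ζ ≠ 1) (h3 : ζ ^ 3 ≠ 1) :
    (1 + ζ) * (1 + ζ) / ((1 - ζ) * (1 - ζ))
      + 3 * ((1 + ζ) * (1 + (ζ ^ 3)⁻¹) / ((1 - ζ) * (1 - (ζ ^ 3)⁻¹)))
      = -2 - 2 * ((ζ - ζ ^ 2) / (1 - ζ ^ 3)) := by
  have h1' : 1 - ζ ≠ 0 := sub_ne_zero.mpr (fun h => h1 h.symm)
  have h3' : 1 - ζ ^ 3 ≠ 0 := sub_ne_zero.mpr (fun h => h3 h.symm)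
  have h30 : ζ ^ 3 ≠ 0 := pow_ne_zero _ h0
  have h3i : 1 - (ζ ^ 3)⁻¹ ≠ 0 := by
    rw [sub_ne_zero]
    intro h
    rw [eq_comm, inv_eq_one] at h
    exact h3 h
  have hY : (1 - ζ) * (ζ ^ 3 - 1) ≠ 0 :=
    mul_ne_zero h1' (sub_ne_zero.mpr h3)
  field_simp
  ring

lemma char_sum (p : ℕ) (μ : ℂ) (hprim : IsPrimitiveRoot μ p) (m : ℕ) :
    ∑ k ∈ range p, μ ^ (k * m) = if p ∣ m then (p : ℂ) else 0 := by
  have hrw : ∀ k, μ ^ (k * m) = (μ ^ m) ^ k := by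
    intro k; rw [← pow_mul, mul_comm]
  simp_rw [hrw]
  by_cases h : p ∣ m
  · rw [if_pos h]
    have : μ ^ m = 1 := (hprim.pow_eq_one_iff_dvd m).mpr h
    simp [this]
  · rw [if_neg h]
    have hne : μ ^ m ≠ 1 := fun hh => h ((hprim.pow_eq_one_iff_dvd m).mp hh)
    rw [geom_sum_eq hne]
    have : (μ ^ m) ^ p = 1 := by
      rw [← pow_mul, mul_comm, pow_mul, hprim.pow_eq_one, one_pow]
    rw [this, sub_self, zero_div]

lemma char_sum_Icc (p : ℕ) (hp : p ≠ 0) (μ : ℂ) (hprim : IsPrimitiveRoot μ p) (m : ℕ) :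
    ∑ k ∈ Icc 1 (p - 1), μ ^ (k * m) = (if p ∣ m then (p : ℂ) else 0) - 1 := by
  have hins : range p = insert 0 (Icc 1 (p - 1)) := by
    ext x; simp [Finset.mem_Icc, Finset.mem_range, Finset.mem_insert]; omega
  have h0 : (0 : ℕ) ∉ Icc 1 (p - 1) := by simp
  have h := char_sum p μ hprim m
  rw [hins, Finset.sum_insert h0] at h
  simp only [zero_mul, pow_zero] at h
  linear_combination h

lemma master (p : ℕ) (hp : p.Prime) (hp3 : 3 < p) (j₁ j₂ : ℕ)
    (hj₁ : j₁ < p) (hj₂ : j₂ < p)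
    (h1 : ∀ j < p, (p ∣ 3 * j + 1 ↔ j = j₁))
    (h2 : ∀ j < p, (p ∣ 3 * j + 2 ↔ j = j₂)) :
    Ipq p 1 + 3 * Ipq p (-3)
      = -2 * ((p : ℂ) - 1) - 2 * ((j₂ : ℂ) - (j₁ : ℂ)) := by
  have hp0 : p ≠ 0 := hp.pos.ne'
  have hpC : (p : ℂ) ≠ 0 := Nat.cast_ne_zero.mpr hp0
  set μ := mu p with hμdef
  have hprim : IsPrimitiveRoot μ p := Complex.isPrimitiveRoot_exp p hp0
  have hμ0 : μ ≠ 0 := Complex.exp_ne_zero _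
  -- facts for k in the index set
  have hk1 : ∀ k ∈ Icc 1 (p - 1), μ ^ k ≠ 1 := by
    intro k hk
    rw [Finset.mem_Icc] at hk
    intro h
    have := (hprim.pow_eq_one_iff_dvd k).mp h
    have := Nat.le_of_dvd (by omega) this
    omega
  have hk3 : ∀ k ∈ Icc 1 (p - 1), (μ ^ k) ^ 3 ≠ 1 := by
    intro k hk
    rw [Finset.mem_Icc] at hk
    intro h
    rw [← pow_mul] at h
    have hd := (hprim.pow_eq_one_iff_dvd _).mp h
    rcases hp.dvd_mul.mp hd with h' | h'
    · have := Nat.le_of_dvd (by omega) h'; omega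
    · have := Nat.le_of_dvd (by norm_num) h'; omega
  have step1 : Ipq p 1 + 3 * Ipq p (-3)
      = ∑ k ∈ Icc 1 (p - 1),
          ((1 + μ ^ k) * (1 + μ ^ k) / ((1 - μ ^ k) * (1 - μ ^ k))
            + 3 * ((1 + μ ^ k) * (1 + ((μ ^ k) ^ 3)⁻¹)
              / ((1 - μ ^ k) * (1 - ((μ ^ k) ^ 3)⁻¹)))) := by
    rw [Ipq, Ipq, Finset.mul_sum, ← Finset.sum_add_distrib]
    refine Finset.sum_congr rfl fun k hk => ?_
    have e1 : μ ^ ((1 : ℤ) * k) = μ ^ k := by rw [one_mul, zpow_natCast]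
    have e2 : μ ^ ((k : ℤ)) = μ ^ k := zpow_natCast μ k
    have e3 : μ ^ ((-3 : ℤ) * k) = ((μ ^ k) ^ 3)⁻¹ := by
      rw [show ((-3 : ℤ) * k) = -((k * 3 : ℕ) : ℤ) by push_cast; ring,
        zpow_neg, zpow_natCast, pow_mul]
    rw [e1, e2, e3]
  rw [step1]
  have step2 : ∑ k ∈ Icc 1 (p - 1),
          ((1 + μ ^ k) * (1 + μ ^ k) / ((1 - μ ^ k) * (1 - μ ^ k))
            + 3 * ((1 + μ ^ k) * (1 + ((μ ^ k) ^ 3)⁻¹)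
              / ((1 - μ ^ k) * (1 - ((μ ^ k) ^ 3)⁻¹))))
      = ∑ k ∈ Icc 1 (p - 1),
          (-2 - 2 * ((μ ^ k - (μ ^ k) ^ 2) / (1 - (μ ^ k) ^ 3))) := by
    refine Finset.sum_congr rfl fun k hk => ?_
    exact termwise (μ ^ k) (pow_ne_zero _ hμ0) (hk1 k hk) (hk3 k hk)
  rw [step2]
  -- T computation
  have hT : ∑ k ∈ Icc 1 (p - 1), (μ ^ k - (μ ^ k) ^ 2) / (1 - (μ ^ k) ^ 3)
      = (j₂ : ℂ) - (j₁ : ℂ) := by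
    have step3 : ∀ k ∈ Icc 1 (p - 1),
        (μ ^ k - (μ ^ k) ^ 2) / (1 - (μ ^ k) ^ 3)
          = -(1 / p) * ∑ j ∈ range p,
              ((j : ℂ) * μ ^ (k * (3 * j + 1)) - (j : ℂ) * μ ^ (k * (3 * j + 2))) := by
      intro k hk
      have hη3 : (μ ^ k) ^ 3 = μ ^ (k * 3) := by rw [pow_mul]
      have hηp : (μ ^ (k * 3)) ^ p = 1 := by
        rw [← pow_mul, mul_comm, pow_mul, hprim.pow_eq_one, one_pow]
      have hη1 : μ ^ (k * 3) ≠ 1 := by rw [← hη3]; exact hk3 k hk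
      rw [div_eq_mul_one_div, hη3, inv_one_sub p hpC _ hη1 hηp]
      rw [show (μ ^ k - (μ ^ k) ^ 2) * (-(1 / (p : ℂ)) * ∑ j ∈ range p, (j : ℂ) * (μ ^ (k * 3)) ^ j)
          = -(1 / (p : ℂ)) * ((μ ^ k - (μ ^ k) ^ 2) * ∑ j ∈ range p, (j : ℂ) * (μ ^ (k * 3)) ^ j) by ring]
      congr 1
      rw [Finset.mul_sum]
      refine Finset.sum_congr rfl fun j _ => ?_
      have ea : μ ^ k * μ ^ (k * 3 * j) = μ ^ (k * (3 * j + 1)) := by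
        rw [← pow_add]; congr 1; ring
      have eb : (μ ^ k) ^ 2 * μ ^ (k * 3 * j) = μ ^ (k * (3 * j + 2)) := by
        rw [← pow_mul, ← pow_add]; congr 1; ring
      rw [← pow_mul]
      linear_combination (j : ℂ) * ea - (j : ℂ) * eb
    rw [Finset.sum_congr rfl step3, ← Finset.mul_sum, Finset.sum_comm]
    have step4 : ∀ j ∈ range p,
        ∑ k ∈ Icc 1 (p - 1),
            ((j : ℂ) * μ ^ (k * (3 * j + 1)) - (j : ℂ) * μ ^ (k * (3 * j + 2)))
          = (j : ℂ) * (if p ∣ 3 * j + 1 then (p : ℂ) else 0)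
            - (j : ℂ) * (if p ∣ 3 * j + 2 then (p : ℂ) else 0) := by
      intro j _
      rw [Finset.sum_sub_distrib, ← Finset.mul_sum, ← Finset.mul_sum,
        char_sum_Icc p hp0 μ hprim, char_sum_Icc p hp0 μ hprim]
      ring
    rw [Finset.sum_congr rfl step4, Finset.sum_sub_distrib]
    have hs1 : ∑ j ∈ range p, (j : ℂ) * (if p ∣ 3 * j + 1 then (p : ℂ) else 0)
        = (j₁ : ℂ) * p := by
      rw [Finset.sum_eq_single j₁]
      · rw [if_pos ((h1 j₁ hj₁).mpr rfl)]
      · intro b hb hbne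
        rw [if_neg, mul_zero]
        exact fun hd => hbne ((h1 b (Finset.mem_range.mp hb)).mp hd)
      · intro h; exact absurd (Finset.mem_range.mpr hj₁) h
    have hs2 : ∑ j ∈ range p, (j : ℂ) * (if p ∣ 3 * j + 2 then (p : ℂ) else 0)
        = (j₂ : ℂ) * p := by
      rw [Finset.sum_eq_single j₂]
      · rw [if_pos ((h2 j₂ hj₂).mpr rfl)]
      · intro b hb hbne
        rw [if_neg, mul_zero]
        exact fun hd => hbne ((h2 b (Finset.mem_range.mp hb)).mp hd)
      · intro h; exact absurd (Finset.mem_range.mpr hj₂) h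
    rw [hs1, hs2]
    field_simp
    ring
  rw [Finset.sum_sub_distrib, ← Finset.mul_sum, hT, Finset.sum_const,
    Nat.card_Icc]
  have : ((p - 1 + 1 - 1 : ℕ) : ℂ) = (p : ℂ) - 1 := by
    have : p - 1 + 1 - 1 = p - 1 := by omega
    rw [this, Nat.cast_sub (by omega)]
    norm_num
  rw [nsmul_eq_mul, this]
  ring

lemma div_case (c a s : ℕ) (hc : 1 ≤ c) (ha : 1 ≤ a) (ha2 : a ≤ 2)
    (hs : s < c) (hkey : 3 * s + a = c ∨ 3 * s + a = 2 * c)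
    (hne : ¬ (3 ∣ c)) :
    ∀ j < c, (c ∣ 3 * j + a ↔ j = s) := by
  intro j hj
  constructor
  · rintro ⟨t, ht⟩
    have ht2 : t ≤ 2 := by nlinarith
    interval_cases t <;> omega
  · rintro rfl
    rcases hkey with h | h
    · exact ⟨1, by omega⟩
    · exact ⟨2, by omega⟩

theorem stmt_14 (p : ℕ) (hp : p.Prime) (hp3 : 3 < p) :
    (∀ r : ℕ, p = 3 * r + 1 → Ipq p 1 + 3 * Ipq p (-3) = -(8 * (r : ℂ))) ∧
    (∀ r : ℕ, p = 3 * r + 2 → Ipq p 1 + 3 * Ipq p (-3) = -(4 * (r : ℂ))) := by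
  constructor
  · intro r hr
    have hne : ¬ (3 ∣ p) := by omega
    have h1 := div_case p 1 r (by omega) (by omega) (by omega) (by omega)
      (Or.inl (by omega)) hne
    have h2 := div_case p 2 (2 * r) (by omega) (by omega) (by omega) (by omega)
      (Or.inr (by omega)) hne
    rw [master p hp hp3 r (2 * r) (by omega) (by omega) h1 h2, hr]
    push_cast
    ring
  · intro r hr
    have hne : ¬ (3 ∣ p) := by omega
    have h1 := div_case p 1 (2 * r + 1) (by omega) (by omega) (by omega) (by omega)
      (Or.inr (by omega)) hne
    have h2 := div_case p 2 r (by omega) (by omega) (by omega) (by omega)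
      (Or.inl (by omega)) hne
    rw [master p hp hp3 (2 * r + 1) r (by omega) (by omega) h1 h2, hr]
    push_cast
    ring
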